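/- (Word-counting interpretation of q_k.) Let m ≥ 1 and 0 ≤ k ≤ m be integers. The number of words w over the three-letter alphabet {U, D∘, D•} such that (i) w contains exactly m occurrences of U, exactly k occurrences of D∘ and exactly m−k occurrences of D• (so w has length 2m), (ii) the last letter of w is U, and (iii) w contains no occurrence of the letter U immediately followed by the letter D•, equals C(m,k)·C(m+k−1,k) = q_k(m), where C(·,·) is the ordinary binomial coefficient. -/

import Mathlib

/-- The three-letter alphabet `{U, D∘, D•}`. -/
inductive Letter3 : Type
  | U : Letter3
  | Do : Letter3
  | Db : Letter3
  deriving DecidableEq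

namespace S18
open Letter3

instance : Fintype Letter3 := Fintype.ofList [U, Do, Db] (by intro x; cases x <;> simp)

lemma length_eq (w : List Letter3) :
    w.length = w.count U + w.count Do + w.count Db := by
  induction w with
  | nil => simp
  | cons x t ih => cases x <;> simp [List.count_cons, ih] <;> omega

lemma singleton_prefix_iff (x : Letter3) (t : List Letter3) :
    [x] <+: t ↔ t.head? = some x := by
  cases t <;> simp [List.cons_prefix_cons, eq_comm]

lemma avoid_cons (x : Letter3) (t : List Letter3) :
    ([U, Db] <:+: x :: t) ↔ (x = U ∧ t.head? = some Db) ∨ ([U, Db] <:+: t) := by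
  rw [List.infix_cons_iff, List.cons_prefix_cons, singleton_prefix_iff, eq_comm]

lemma getLast?_cons_eq (x : Letter3) (t : List Letter3) :
    (x :: t).getLast? = some U ↔ ((t = [] ∧ x = U) ∨ t.getLast? = some U) := by
  cases t with
  | nil => simp [eq_comm]
  | cons y s => simp [List.getLast?_cons_cons]

/-- The set counted by the theorem. -/
def Pset (a b c : ℕ) : Set (List Letter3) :=
  {w | w.count U = a ∧ w.count Do = b ∧ w.count Db = c ∧
    w.getLast? = some U ∧ ¬ ([U, Db] <:+: w)}

/-- Auxiliary: words that are empty or end with `U`, don't start with `Db`,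
and avoid the factor `U Db`. -/
def Qset (a b c : ℕ) : Set (List Letter3) :=
  {w | w.count U = a ∧ w.count Do = b ∧ w.count Db = c ∧
    (w = [] ∨ w.getLast? = some U) ∧ w.head? ≠ some Db ∧ ¬ ([U, Db] <:+: w)}

lemma finP (a b c : ℕ) : (Pset a b c).Finite := by
  apply (List.finite_length_eq Letter3 (a + b + c)).subset
  rintro w ⟨h1, h2, h3, -⟩
  simp only [Set.mem_setOf_eq, length_eq w, h1, h2, h3]

lemma finQ (a b c : ℕ) : (Qset a b c).Finite := by
  apply (List.finite_length_eq Letter3 (a + b + c)).subset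
  rintro w ⟨h1, h2, h3, -⟩
  simp only [Set.mem_setOf_eq, length_eq w, h1, h2, h3]

lemma Pset_zero (b c : ℕ) : Pset 0 b c = ∅ := by
  ext w
  simp only [Pset, Set.mem_setOf_eq, Set.mem_empty_iff_false, iff_false]
  rintro ⟨h1, -, -, h4, -⟩
  have : U ∈ w := List.mem_of_getLast? h4
  have := List.count_pos_iff.mpr this
  omega

lemma Qset_zero_ne (b c : ℕ) (h : ¬ (b = 0 ∧ c = 0)) : Qset 0 b c = ∅ := by
  ext w
  simp only [Qset, Set.mem_setOf_eq, Set.mem_empty_iff_false, iff_false]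
  rintro ⟨h1, h2, h3, h4 | h4, -⟩
  · subst h4; simp at h1 h2 h3; omega
  · have : U ∈ w := List.mem_of_getLast? h4
    have := List.count_pos_iff.mpr this
    omega

lemma Qset_zero : Qset 0 0 0 = {[]} := by
  ext w
  simp only [Qset, Set.mem_setOf_eq, Set.mem_singleton_iff]
  constructor
  · rintro ⟨h1, h2, h3, h4 | h4, -⟩
    · exact h4
    · have : U ∈ w := List.mem_of_getLast? h4
      have := List.count_pos_iff.mpr this
      omega
  · rintro rfl; refine ⟨rfl, rfl, rfl, Or.inl rfl, by simp, by simp⟩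

lemma count_cons_self (x : Letter3) (t : List Letter3) :
    (x :: t).count x = t.count x + 1 := by simp

lemma count_cons_ne (x y : Letter3) (t : List Letter3) (h : y ≠ x) :
    (x :: t).count y = t.count y := by
  simp [List.count_cons, h, Ne.symm h]

lemma P_inter_U (a b c : ℕ) :
    Pset (a + 1) b c ∩ {w | w.head? = some U} = (U :: ·) '' Qset a b c := by
  ext w
  constructor
  · rintro ⟨⟨h1, h2, h3, h4, h5⟩, hh⟩
    match w, hh with
    | .U :: t, _ =>
      refine ⟨t, ⟨?_, ?_, ?_, ?_, ?_, ?_⟩, rfl⟩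
      · simp [List.count_cons] at h1; omega
      · simpa [List.count_cons] using h2
      · simpa [List.count_cons] using h3
      · rcases (getLast?_cons_eq _ _).mp h4 with ⟨h, -⟩ | h
        · exact Or.inl h
        · exact Or.inr h
      · intro hc; exact h5 ((avoid_cons _ _).mpr (Or.inl ⟨rfl, hc⟩))
      · intro hc; exact h5 ((avoid_cons _ _).mpr (Or.inr hc))
  · rintro ⟨t, ⟨h1, h2, h3, h4, h5, h6⟩, rfl⟩
    refine ⟨⟨?_, ?_, ?_, ?_, ?_⟩, rfl⟩
    · simp [List.count_cons]; omega
    · simpa [List.count_cons] using h2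
    · simpa [List.count_cons] using h3
    · rcases h4 with h | h
      · exact (getLast?_cons_eq _ _).mpr (Or.inl ⟨h, rfl⟩)
      · exact (getLast?_cons_eq _ _).mpr (Or.inr h)
    · intro hc
      rcases (avoid_cons _ _).mp hc with ⟨-, h⟩ | h
      · exact h5 h
      · exact h6 h

lemma P_inter_Do (a b c : ℕ) :
    Pset a (b + 1) c ∩ {w | w.head? = some Do} = (Do :: ·) '' Pset a b c := by
  ext w
  constructor
  · rintro ⟨⟨h1, h2, h3, h4, h5⟩, hh⟩
    match w, hh with
    | .Do :: t, _ =>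
      refine ⟨t, ⟨?_, ?_, ?_, ?_, ?_⟩, rfl⟩
      · simpa [List.count_cons] using h1
      · simp [List.count_cons] at h2; omega
      · simpa [List.count_cons] using h3
      · rcases (getLast?_cons_eq _ _).mp h4 with ⟨-, h⟩ | h
        · exact absurd h (by simp)
        · exact h
      · intro hc; exact h5 ((avoid_cons _ _).mpr (Or.inr hc))
  · rintro ⟨t, ⟨h1, h2, h3, h4, h5⟩, rfl⟩
    refine ⟨⟨?_, ?_, ?_, ?_, ?_⟩, rfl⟩
    · simpa [List.count_cons] using h1
    · simp [List.count_cons]; omega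
    · simpa [List.count_cons] using h3
    · exact (getLast?_cons_eq _ _).mpr (Or.inr h4)
    · intro hc
      rcases (avoid_cons _ _).mp hc with ⟨h, -⟩ | h
      · exact absurd h (by simp)
      · exact h5 h

lemma P_inter_Db (a b c : ℕ) :
    Pset a b (c + 1) ∩ {w | w.head? = some Db} = (Db :: ·) '' Pset a b c := by
  ext w
  constructor
  · rintro ⟨⟨h1, h2, h3, h4, h5⟩, hh⟩
    match w, hh with
    | .Db :: t, _ =>
      refine ⟨t, ⟨?_, ?_, ?_, ?_, ?_⟩, rfl⟩
      · simpa [List.count_cons] using h1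
      · simpa [List.count_cons] using h2
      · simp [List.count_cons] at h3; omega
      · rcases (getLast?_cons_eq _ _).mp h4 with ⟨-, h⟩ | h
        · exact absurd h (by simp)
        · exact h
      · intro hc; exact h5 ((avoid_cons _ _).mpr (Or.inr hc))
  · rintro ⟨t, ⟨h1, h2, h3, h4, h5⟩, rfl⟩
    refine ⟨⟨?_, ?_, ?_, ?_, ?_⟩, rfl⟩
    · simpa [List.count_cons] using h1
    · simpa [List.count_cons] using h2
    · simp [List.count_cons]; omega
    · exact (getLast?_cons_eq _ _).mpr (Or.inr h4)
    · intro hc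
      rcases (avoid_cons _ _).mp hc with ⟨h, -⟩ | h
      · exact absurd h (by simp)
      · exact h5 h

lemma Q_inter_U (a b c : ℕ) :
    Qset (a + 1) b c ∩ {w | w.head? = some U} = (U :: ·) '' Qset a b c := by
  ext w
  constructor
  · rintro ⟨⟨h1, h2, h3, h4, h5, h6⟩, hh⟩
    match w, hh with
    | .U :: t, _ =>
      refine ⟨t, ⟨?_, ?_, ?_, ?_, ?_, ?_⟩, rfl⟩
      · simp [List.count_cons] at h1; omega
      · simpa [List.count_cons] using h2
      · simpa [List.count_cons] using h3
      · rcases h4 with h | h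
        · exact absurd h (by simp)
        · rcases (getLast?_cons_eq _ _).mp h with ⟨h, -⟩ | h
          · exact Or.inl h
          · exact Or.inr h
      · intro hc; exact h6 ((avoid_cons _ _).mpr (Or.inl ⟨rfl, hc⟩))
      · intro hc; exact h6 ((avoid_cons _ _).mpr (Or.inr hc))
  · rintro ⟨t, ⟨h1, h2, h3, h4, h5, h6⟩, rfl⟩
    refine ⟨⟨?_, ?_, ?_, ?_, ?_, ?_⟩, rfl⟩
    · simp [List.count_cons]; omega
    · simpa [List.count_cons] using h2
    · simpa [List.count_cons] using h3
    · refine Or.inr ?_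
      rcases h4 with h | h
      · exact (getLast?_cons_eq _ _).mpr (Or.inl ⟨h, rfl⟩)
      · exact (getLast?_cons_eq _ _).mpr (Or.inr h)
    · simp
    · intro hc
      rcases (avoid_cons _ _).mp hc with ⟨-, h⟩ | h
      · exact h5 h
      · exact h6 h

lemma Q_inter_Do (a b c : ℕ) :
    Qset a (b + 1) c ∩ {w | w.head? = some Do} = (Do :: ·) '' Pset a b c := by
  ext w
  constructor
  · rintro ⟨⟨h1, h2, h3, h4, h5, h6⟩, hh⟩
    match w, hh with
    | .Do :: t, _ =>
      refine ⟨t, ⟨?_, ?_, ?_, ?_, ?_⟩, rfl⟩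
      · simpa [List.count_cons] using h1
      · simp [List.count_cons] at h2; omega
      · simpa [List.count_cons] using h3
      · rcases h4 with h | h
        · exact absurd h (by simp)
        · rcases (getLast?_cons_eq _ _).mp h with ⟨-, h⟩ | h
          · exact absurd h (by simp)
          · exact h
      · intro hc; exact h6 ((avoid_cons _ _).mpr (Or.inr hc))
  · rintro ⟨t, ⟨h1, h2, h3, h4, h5⟩, rfl⟩
    refine ⟨⟨?_, ?_, ?_, ?_, ?_, ?_⟩, rfl⟩
    · simpa [List.count_cons] using h1
    · simp [List.count_cons]; omega
    · simpa [List.count_cons] using h3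
    · exact Or.inr ((getLast?_cons_eq _ _).mpr (Or.inr h4))
    · simp
    · intro hc
      rcases (avoid_cons _ _).mp hc with ⟨h, -⟩ | h
      · exact absurd h (by simp)
      · exact h5 h

lemma Q_inter_Db (a b c : ℕ) : Qset a b c ∩ {w | w.head? = some Db} = ∅ := by
  ext w
  simp only [Set.mem_inter_iff, Set.mem_setOf_eq, Set.mem_empty_iff_false, iff_false, not_and]
  rintro ⟨-, -, -, -, h5, -⟩ hc
  exact h5 hc

lemma P_inter_Do_zero (a c : ℕ) : Pset a 0 c ∩ {w | w.head? = some Do} = ∅ := by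
  ext w
  simp only [Set.mem_inter_iff, Set.mem_setOf_eq, Set.mem_empty_iff_false, iff_false, not_and]
  rintro ⟨-, h2, -⟩ hc
  match w, hc with
  | .Do :: t, _ => simp [List.count_cons] at h2

lemma P_inter_Db_zero (a b : ℕ) : Pset a b 0 ∩ {w | w.head? = some Db} = ∅ := by
  ext w
  simp only [Set.mem_inter_iff, Set.mem_setOf_eq, Set.mem_empty_iff_false, iff_false, not_and]
  rintro ⟨-, -, h3, -⟩ hc
  match w, hc with
  | .Db :: t, _ => simp [List.count_cons] at h3

lemma Q_inter_Do_zero (a c : ℕ) : Qset a 0 c ∩ {w | w.head? = some Do} = ∅ := by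
  ext w
  simp only [Set.mem_inter_iff, Set.mem_setOf_eq, Set.mem_empty_iff_false, iff_false, not_and]
  rintro ⟨-, h2, -⟩ hc
  match w, hc with
  | .Do :: t, _ => simp [List.count_cons] at h2
lemma tri_split (S : Set (List Letter3)) (h : ∀ w ∈ S, w ≠ []) :
    S = (S ∩ {w | w.head? = some U}) ∪
      ((S ∩ {w | w.head? = some Do}) ∪ (S ∩ {w | w.head? = some Db})) := by
  ext w
  simp only [Set.mem_union, Set.mem_inter_iff, Set.mem_setOf_eq]
  constructor
  · intro hw
    match w, h w hw with
    | x :: t, _ => cases x <;> simp [hw]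
  · rintro (⟨h1, -⟩ | ⟨h1, -⟩ | ⟨h1, -⟩) <;> exact h1

lemma head_disj (x y : Letter3) (hxy : x ≠ y) (S T : Set (List Letter3)) :
    Disjoint (S ∩ {w | w.head? = some x}) (T ∩ {w | w.head? = some y}) := by
  rw [Set.disjoint_left]
  rintro w ⟨-, h1⟩ ⟨-, h2⟩
  simp only [Set.mem_setOf_eq] at h1 h2
  rw [h1] at h2
  exact hxy (Option.some.inj h2)

lemma ncard_split (S : Set (List Letter3)) (hS : S.Finite) (h : ∀ w ∈ S, w ≠ []) :
    S.ncard = (S ∩ {w | w.head? = some U}).ncard +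
      ((S ∩ {w | w.head? = some Do}).ncard + (S ∩ {w | w.head? = some Db}).ncard) := by
  conv_lhs => rw [tri_split S h]
  rw [Set.ncard_union_eq ?_ (hS.inter_of_left _) ((hS.inter_of_left _).union (hS.inter_of_left _)),
    Set.ncard_union_eq (head_disj Do Db (by simp) S S) (hS.inter_of_left _) (hS.inter_of_left _)]
  exact Set.disjoint_union_right.mpr
    ⟨head_disj U Do (by simp) S S, head_disj U Db (by simp) S S⟩

lemma ncard_cons_image (x : Letter3) (S : Set (List Letter3)) :
    ((x :: ·) '' S).ncard = S.ncard :=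
  Set.ncard_image_of_injective S (fun _ _ h => by simpa using h)

lemma choose_symm' (B c : ℕ) : Nat.choose (B + c) B = Nat.choose (B + c) c := by
  rw [← Nat.choose_symm (show c ≤ B + c by omega)]
  congr 1
  omega

lemma arQ (A B c : ℕ) :
    Nat.choose (A + B) (B + 1) * Nat.choose (B + c) c
      + Nat.choose (A + B) B * Nat.choose (B + c) B
    = Nat.choose (A + B + 1) (B + 1) * Nat.choose (B + c) c := by
  rw [choose_symm', Nat.choose_succ_succ]
  ring

lemma arP (A B C : ℕ) :
    Nat.choose (A + B) (B + 1) * Nat.choose (B + C + 1) (C + 1)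
      + (Nat.choose (A + B) B * Nat.choose (B + C + 1) B
        + Nat.choose (A + B + 1) (B + 1) * Nat.choose (B + C + 1) (B + 1))
    = Nat.choose (A + B + 1) (B + 1) * Nat.choose (B + C + 2) (B + 1) := by
  have h1 : Nat.choose (B + C + 1) (C + 1) = Nat.choose (B + C + 1) B := by
    rw [← Nat.choose_symm (show C + 1 ≤ B + C + 1 by omega)]
    congr 1
    omega
  have h2 : Nat.choose (B + C + 2) (B + 1) =
      Nat.choose (B + C + 1) B + Nat.choose (B + C + 1) (B + 1) := by
    rw [show B + C + 2 = (B + C + 1) + 1 by omega, Nat.choose_succ_succ]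
  have h3 : Nat.choose (A + B + 1) (B + 1) =
      Nat.choose (A + B) B + Nat.choose (A + B) (B + 1) := Nat.choose_succ_succ _ _
  rw [h1, h2, h3]
  ring
lemma main (n : ℕ) : ∀ a b c : ℕ, a + b + c ≤ n →
    (Pset a b c).ncard =
      (if a = 0 then 0 else Nat.choose (a + b - 1) b * Nat.choose (b + c) b) ∧
    (Qset a b c).ncard = Nat.choose (a + b - 1) b * Nat.choose (b + c - 1) c := by
  induction n with
  | zero =>
    intro a b c h
    obtain ⟨rfl, rfl, rfl⟩ : a = 0 ∧ b = 0 ∧ c = 0 := by omega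
    rw [Pset_zero, Qset_zero]
    simp
  | succ n ih =>
    intro a b c h
    match a with
    | 0 =>
      constructor
      · rw [Pset_zero]; simp
      · by_cases hbc : b = 0 ∧ c = 0
        · obtain ⟨rfl, rfl⟩ := hbc
          rw [Qset_zero]
          simp
        · rw [Qset_zero_ne _ _ hbc, Set.ncard_empty]
          symm
          rcases Nat.eq_zero_or_pos b with rfl | hb
          · have hc : c ≠ 0 := fun h0 => hbc ⟨rfl, h0⟩
            have h0 : Nat.choose (c - 1) c = 0 := Nat.choose_eq_zero_of_lt (by omega)
            simp [h0]
          · have h0 : Nat.choose (b - 1) b = 0 := Nat.choose_eq_zero_of_lt (by omega)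
            simp [h0]
    | A + 1 =>
      have ihQ := (ih A b c (by omega)).2
      have hPne : ∀ w ∈ Pset (A + 1) b c, w ≠ [] := by
        rintro w ⟨-, -, -, h4, -⟩ rfl; simp at h4
      have hQne : ∀ w ∈ Qset (A + 1) b c, w ≠ [] := by
        rintro w ⟨h1, -⟩ rfl; simp at h1
      constructor
      · rw [ncard_split _ (finP _ _ _) hPne, P_inter_U, ncard_cons_image, ihQ,
          if_neg (Nat.succ_ne_zero A)]
        match b, c with
        | 0, 0 =>
          rw [P_inter_Do_zero, P_inter_Db_zero]
          simp
        | 0, C + 1 =>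
          rw [P_inter_Do_zero, P_inter_Db, ncard_cons_image]
          have hP := (ih (A + 1) 0 C (by omega)).1
          rw [if_neg (Nat.succ_ne_zero A)] at hP
          rw [hP, Set.ncard_empty]
          have e1 : 0 + (C + 1) - 1 = C := by omega
          rw [e1]
          simp [Nat.choose_succ_self]
        | B + 1, 0 =>
          rw [P_inter_Db_zero, P_inter_Do, ncard_cons_image]
          have hP := (ih (A + 1) B 0 (by omega)).1
          rw [if_neg (Nat.succ_ne_zero A)] at hP
          rw [hP, Set.ncard_empty]
          have e1 : A + (B + 1) - 1 = A + B := by omega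
          have e2 : B + 1 + 0 - 1 = B := by omega
          have e3 : A + 1 + B - 1 = A + B := by omega
          have e4 : A + 1 + (B + 1) - 1 = A + B + 1 := by omega
          rw [e1, e2, e3, e4]
          simp only [Nat.choose_zero_right, Nat.choose_self, Nat.add_zero, mul_one]
          rw [Nat.choose_succ_succ]
          ring
        | B + 1, C + 1 =>
          rw [P_inter_Do, P_inter_Db, ncard_cons_image, ncard_cons_image]
          have hP1 := (ih (A + 1) B (C + 1) (by omega)).1
          rw [if_neg (Nat.succ_ne_zero A)] at hP1
          have hP2 := (ih (A + 1) (B + 1) C (by omega)).1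
          rw [if_neg (Nat.succ_ne_zero A)] at hP2
          rw [hP1, hP2]
          have e1 : A + (B + 1) - 1 = A + B := by omega
          have e2 : B + 1 + (C + 1) - 1 = B + C + 1 := by omega
          have e3 : A + 1 + B - 1 = A + B := by omega
          have e4 : B + (C + 1) = B + C + 1 := by omega
          have e5 : A + 1 + (B + 1) - 1 = A + B + 1 := by omega
          have e6 : B + 1 + C = B + C + 1 := by omega
          have e7 : B + 1 + (C + 1) = B + C + 2 := by omega
          rw [e1, e2, e3, e4, e5, e6, e7]
          exact arP A B C
      · rw [ncard_split _ (finQ _ _ _) hQne, Q_inter_U, ncard_cons_image, Q_inter_Db,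
          Set.ncard_empty, ihQ]
        match b with
        | 0 =>
          rw [Q_inter_Do_zero, Set.ncard_empty]
          simp
        | B + 1 =>
          rw [Q_inter_Do, ncard_cons_image]
          have hP := (ih (A + 1) B c (by omega)).1
          rw [if_neg (Nat.succ_ne_zero A)] at hP
          rw [hP]
          have e1 : A + (B + 1) - 1 = A + B := by omega
          have e2 : B + 1 + c - 1 = B + c := by omega
          have e3 : A + 1 + B - 1 = A + B := by omega
          have e4 : A + 1 + (B + 1) - 1 = A + B + 1 := by omega
          rw [e1, e2, e3, e4]
          simp only [add_zero]
          exact arQ A B c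

end S18

/-- Word-counting interpretation of `q_k(m)`: the number of words over `{U, D∘, D•}`
with `m` letters `U`, `k` letters `D∘`, `m-k` letters `D•`, ending with `U`,
and avoiding the factor `U D•`, equals `C(m,k)·C(m+k-1,k) = q_k(m)`. -/
theorem stmt18 (m k : ℕ) (hm : 1 ≤ m) (hk : k ≤ m) :
    Nat.card {w : List Letter3 //
      w.count .U = m ∧ w.count .Do = k ∧ w.count .Db = m - k ∧
      w.getLast? = some .U ∧ ¬ ([Letter3.U, Letter3.Db] <:+: w)} =
    Nat.choose m k * Nat.choose (m + k - 1) k := by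
  have h := (S18.main (2 * m) m k (m - k) (by omega)).1
  rw [if_neg (by omega)] at h
  have hm' : k + (m - k) = m := by omega
  rw [hm'] at h
  have hcard : Nat.card {w : List Letter3 //
      w.count .U = m ∧ w.count .Do = k ∧ w.count .Db = m - k ∧
      w.getLast? = some .U ∧ ¬ ([Letter3.U, Letter3.Db] <:+: w)} =
      (S18.Pset m k (m - k)).ncard := by
    rw [← Nat.card_coe_set_eq]
    exact Nat.card_congr (Equiv.subtypeEquivRight (fun w => Iff.rfl))
  rw [hcard, h, Nat.mul_comm]
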